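/- Let R = (0, l) x (-h, h) be an open rectangle with l, h > 0. Suppose u2 : R -> R is harmonic in R, extends continuously with continuous derivatives up to the boundary, and satisfies u2 = 0 and the normal derivative (partial u2 / partial y) = 0 on the horizontal boundary segments (0, l) x {h} and (0, l) x {-h}. Then u2 is identically zero in R. -/

import Mathlib

open Set

/-- Second directional derivative of `f` in direction `v` (applied twice). -/
noncomputable def d2 (f : ℝ × ℝ → ℝ) (v : ℝ × ℝ) (p : ℝ × ℝ) : ℝ :=
  fderiv ℝ (fun q => fderiv ℝ f q v) p v

open Complex intervalIntegral Metric MeasureTheory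

section helpers

lemma reProdIm_preconnected (a b c d : ℝ) : IsPreconnected (Ioo a b ×ℂ Ioo c d) := by
  have heq : (Ioo a b ×ℂ Ioo c d)
      = (Complex.reCLM.prod Complex.imCLM).toLinearMap ⁻¹' ((Ioo a b) ×ˢ (Ioo c d)) := by
    ext z
    simp [Complex.mem_reProdIm]
  rw [heq]
  exact (((convex_Ioo a b).prod (convex_Ioo c d)).linear_preimage _).isPreconnected

end helpers


noncomputable def rectInt (f : ℂ → ℂ) (z w : ℂ) : ℂ :=
  (∫ x : ℝ in z.re..w.re, f (x + z.im * I)) - (∫ x : ℝ in z.re..w.re, f (x + w.im * I)) +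
    I • (∫ y : ℝ in z.im..w.im, f (w.re + y * I)) - I • ∫ y : ℝ in z.im..w.im, f (z.re + y * I)

theorem rectInt_eq_zero {f : ℂ → ℂ} {z w : ℂ}
    (Hc : ContinuousOn f (uIcc z.re w.re ×ℂ uIcc z.im w.im))
    (Hd : DifferentiableOn ℂ f
      (Ioo (min z.re w.re) (max z.re w.re) ×ℂ Ioo (min z.im w.im) (max z.im w.im))) :
    rectInt f z w = 0 :=
  Complex.integral_boundary_rect_eq_zero_of_continuousOn_of_differentiableOn f z w Hc Hd

lemma horiz_integrable {f : ℂ → ℂ} {a b c d : ℝ} (hf : ContinuousOn f (Ioo a b ×ℂ Ioo c d))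
    {y r1 r2 : ℝ} (hy : y ∈ Ioo c d) (h1 : r1 ∈ Ioo a b) (h2 : r2 ∈ Ioo a b) :
    IntervalIntegrable (fun x => f (x + y * I)) volume r1 r2 := by
  apply ContinuousOn.intervalIntegrable
  apply hf.comp (Continuous.continuousOn (by continuity))
  intro x hx
  have : x ∈ Ioo a b := Set.ordConnected_Ioo.uIcc_subset h1 h2 hx
  simp [Complex.mem_reProdIm, this, hy]

lemma vert_integrable {f : ℂ → ℂ} {a b c d : ℝ} (hf : ContinuousOn f (Ioo a b ×ℂ Ioo c d))
    {x s1 s2 : ℝ} (hx : x ∈ Ioo a b) (h1 : s1 ∈ Ioo c d) (h2 : s2 ∈ Ioo c d) :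
    IntervalIntegrable (fun y => f (x + y * I)) volume s1 s2 := by
  apply ContinuousOn.intervalIntegrable
  apply hf.comp (Continuous.continuousOn (by continuity))
  intro y hy
  have : y ∈ Ioo c d := Set.ordConnected_Ioo.uIcc_subset h1 h2 hy
  simp [Complex.mem_reProdIm, this, hx]

lemma rectInt_split (f : ℂ → ℂ) (z w : ℂ) (m : ℝ)
    (h1 : IntervalIntegrable (fun y => f (z.re + y * I)) volume z.im m)
    (h2 : IntervalIntegrable (fun y => f (z.re + y * I)) volume m w.im)
    (h3 : IntervalIntegrable (fun y => f (w.re + y * I)) volume z.im m)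
    (h4 : IntervalIntegrable (fun y => f (w.re + y * I)) volume m w.im) :
    rectInt f z w = rectInt f z ⟨w.re, m⟩ + rectInt f ⟨z.re, m⟩ w := by
  have e1 := intervalIntegral.integral_add_adjacent_intervals h1 h2
  have e2 := intervalIntegral.integral_add_adjacent_intervals h3 h4
  simp only [rectInt]
  rw [← e1, ← e2]
  simp only [smul_add]
  abel

theorem morera_rect {f : ℂ → ℂ} {a b c d : ℝ} (hab : a < b) (hcd : c < d)
    (hf : ContinuousOn f (Ioo a b ×ℂ Ioo c d))
    (hz : ∀ p q : ℂ, p ∈ Ioo a b ×ℂ Ioo c d → q ∈ Ioo a b ×ℂ Ioo c d → rectInt f p q = 0) :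
    DifferentiableOn ℂ f (Ioo a b ×ℂ Ioo c d) := by
  set S := Ioo a b ×ℂ Ioo c d with hS
  have hSopen : IsOpen S := isOpen_Ioo.reProdIm isOpen_Ioo
  have hx0 : (a + b) / 2 ∈ Ioo a b := ⟨by linarith, by linarith⟩
  have hy0 : (c + d) / 2 ∈ Ioo c d := ⟨by linarith, by linarith⟩
  set x0 := (a + b) / 2
  set y0 := (c + d) / 2
  set F : ℂ → ℂ := fun z =>
    (∫ x in x0..z.re, f (x + y0 * I)) + I • ∫ y in y0..z.im, f (z.re + y * I) with hF
  have key : ∀ p q : ℂ, p ∈ S → q ∈ S →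
      F q - F p = (∫ x in p.re..q.re, f (x + p.im * I)) +
        I • ∫ y in p.im..q.im, f (q.re + y * I) := by
    intro p q hp hq
    obtain ⟨hpre, hpim⟩ := (Complex.mem_reProdIm).1 hp
    obtain ⟨hqre, hqim⟩ := (Complex.mem_reProdIm).1 hq
    have e1 : (∫ x in x0..p.re, f (x + y0 * I)) + ∫ x in p.re..q.re, f (x + y0 * I)
        = ∫ x in x0..q.re, f (x + y0 * I) :=
      integral_add_adjacent_intervals (horiz_integrable hf hy0 hx0 hpre)
        (horiz_integrable hf hy0 hpre hqre)
    have e2 : (∫ y in y0..p.im, f (q.re + y * I)) + ∫ y in p.im..q.im, f (q.re + y * I)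
        = ∫ y in y0..q.im, f (q.re + y * I) :=
      integral_add_adjacent_intervals (vert_integrable hf hqre hy0 hpim)
        (vert_integrable hf hqre hpim hqim)
    have e3 : rectInt f (⟨p.re, y0⟩ : ℂ) (⟨q.re, p.im⟩ : ℂ) = 0 := by
      exact hz _ _ ⟨hpre, hy0⟩ ⟨hqre, hpim⟩
    simp only [rectInt] at e3
    simp only [hF, smul_eq_mul] at e3 ⊢
    linear_combination -e1 - I * e2 + e3
  have hder : ∀ w ∈ S, HasDerivAt F (f w) w := by
    intro w hw
    rw [hasDerivAt_iff_isLittleO, Asymptotics.isLittleO_iff]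
    intro ε hε
    have hc : ContinuousAt f w := hf.continuousAt (hSopen.mem_nhds hw)
    obtain ⟨ρ₁, hρ₁pos, hρ₁⟩ := Metric.continuousAt_iff.1 hc (ε / 2) (half_pos hε)
    obtain ⟨ρ₂, hρ₂pos, hρ₂⟩ := Metric.isOpen_iff.1 hSopen w hw
    set ρ := min ρ₁ ρ₂ with hρdef
    have hρpos : 0 < ρ := lt_min hρ₁pos hρ₂pos
    have hball : ∀ ζ, dist ζ w < ρ → ζ ∈ S ∧ ‖f ζ - f w‖ ≤ ε / 2 := by
      intro ζ hζ
      refine ⟨hρ₂ (lt_of_lt_of_le hζ (min_le_right _ _)), ?_⟩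
      rw [← dist_eq_norm]
      exact (hρ₁ (lt_of_lt_of_le hζ (min_le_left _ _))).le
    filter_upwards [Metric.ball_mem_nhds w (half_pos hρpos)] with z hzball
    have hzw : ‖z - w‖ < ρ / 2 := by rwa [Metric.mem_ball, dist_eq_norm] at hzball
    have hzS : z ∈ S := (hball z (by rw [dist_eq_norm]; linarith)).1
    obtain ⟨hwre, hwim⟩ := (Complex.mem_reProdIm).1 hw
    obtain ⟨hzre, hzim⟩ := (Complex.mem_reProdIm).1 hzS
    have hre : |z.re - w.re| ≤ ‖z - w‖ := by
      simpa [Complex.sub_re] using Complex.abs_re_le_norm (z - w)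
    have him : |z.im - w.im| ≤ ‖z - w‖ := by
      simpa [Complex.sub_im] using Complex.abs_im_le_norm (z - w)
    -- rewrite the difference using `key`
    have hk := key w z hw hzS
    have hint1 : IntervalIntegrable (fun x => f (x + w.im * I)) volume w.re z.re :=
      horiz_integrable hf hwim hwre hzre
    have hint2 : IntervalIntegrable (fun y => f (z.re + y * I)) volume w.im z.im :=
      vert_integrable hf hzre hwim hzim
    have hsub : F z - F w - (z - w) • f w =
        (∫ x in w.re..z.re, (f (x + w.im * I) - f w)) +
          I • ∫ y in w.im..z.im, (f (z.re + y * I) - f w) := by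
      rw [intervalIntegral.integral_sub hint1 intervalIntegrable_const,
        intervalIntegral.integral_sub hint2 intervalIntegrable_const,
        intervalIntegral.integral_const, intervalIntegral.integral_const, hk]
      have hzwd : z - w = ((z.re - w.re : ℝ) : ℂ) + ((z.im - w.im : ℝ) : ℂ) * I := by
        simp [Complex.ext_iff]
      rw [hzwd]
      simp only [smul_eq_mul, Complex.real_smul]
      ring
    rw [hsub]
    have hb1 : ‖∫ x in w.re..z.re, (f (x + w.im * I) - f w)‖ ≤ ε / 2 * |z.re - w.re| := by
      apply intervalIntegral.norm_integral_le_of_norm_le_const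
      intro x hx
      have hx' : |x - w.re| ≤ |z.re - w.re| := by
        simpa using abs_sub_left_of_mem_uIcc (Set.uIoc_subset_uIcc hx)
      refine (hball _ ?_).2
      rw [dist_eq_norm,
        show (↑x + ↑w.im * I) - w = ((x - w.re : ℝ) : ℂ) from by simp [Complex.ext_iff],
        Complex.norm_real, Real.norm_eq_abs]
      calc |x - w.re| ≤ |z.re - w.re| := hx'
        _ ≤ ‖z - w‖ := hre
        _ < ρ := by linarith
    have hb2 : ‖∫ y in w.im..z.im, (f (z.re + y * I) - f w)‖ ≤ ε / 2 * |z.im - w.im| := by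
      apply intervalIntegral.norm_integral_le_of_norm_le_const
      intro y hy
      have hy' : |y - w.im| ≤ |z.im - w.im| := by
        simpa using abs_sub_left_of_mem_uIcc (Set.uIoc_subset_uIcc hy)
      refine (hball _ ?_).2
      rw [dist_eq_norm]
      calc ‖(↑z.re + ↑y * I) - w‖ ≤ |((↑z.re + ↑y * I) - w).re| + |((↑z.re + ↑y * I) - w).im| := by
            simpa using Complex.norm_le_abs_re_add_abs_im ((↑z.re + ↑y * I) - w)
        _ = |z.re - w.re| + |y - w.im| := by simp
        _ ≤ ‖z - w‖ + |z.im - w.im| := add_le_add hre hy'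
        _ ≤ ‖z - w‖ + ‖z - w‖ := add_le_add le_rfl him
        _ < ρ := by linarith
    calc ‖(∫ x in w.re..z.re, (f (x + w.im * I) - f w)) +
          I • ∫ y in w.im..z.im, (f (z.re + y * I) - f w)‖
        ≤ ‖∫ x in w.re..z.re, (f (x + w.im * I) - f w)‖ +
          ‖I • ∫ y in w.im..z.im, (f (z.re + y * I) - f w)‖ := norm_add_le _ _
      _ = ‖∫ x in w.re..z.re, (f (x + w.im * I) - f w)‖ +
          ‖∫ y in w.im..z.im, (f (z.re + y * I) - f w)‖ := by
            rw [norm_smul]; simp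
      _ ≤ ε / 2 * |z.re - w.re| + ε / 2 * |z.im - w.im| := add_le_add hb1 hb2
      _ ≤ ε / 2 * ‖z - w‖ + ε / 2 * ‖z - w‖ := by
            have := norm_nonneg (z - w)
            gcongr
      _ = ε * ‖z - w‖ := by ring
  -- F is holomorphic on S, so its derivative f is too
  have hFdiff : DifferentiableOn ℂ F S := fun w hw =>
    ((hder w hw).differentiableAt).differentiableWithinAt
  have hFan : AnalyticOnNhd ℂ F S := hFdiff.analyticOnNhd hSopen
  have hdF : AnalyticOnNhd ℂ (deriv F) S := hFan.deriv
  intro w hw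
  have : f =ᶠ[nhds w] deriv F := by
    filter_upwards [hSopen.mem_nhds hw] with ζ hζ
    exact ((hder ζ hζ).deriv).symm
  exact ((hdF w hw).differentiableAt.congr_of_eventuallyEq this).differentiableWithinAt


lemma g_diffAt {u2 : ℝ × ℝ → ℝ} {ζ : ℂ}
    (hcd : ContDiffAt ℝ 2 u2 (ζ.re, ζ.im))
    (hlap : d2 u2 (1,0) (ζ.re, ζ.im) + d2 u2 (0,1) (ζ.re, ζ.im) = 0) :
    DifferentiableAt ℂ (fun z : ℂ => ((fderiv ℝ u2 (z.re, z.im) (1,0) : ℝ) : ℂ)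
      - (fderiv ℝ u2 (z.re, z.im) (0,1) : ℂ) * I) ζ := by
  have hfd : ContDiffAt ℝ 1 (fderiv ℝ u2) (ζ.re, ζ.im) := hcd.fderiv_right le_rfl
  have hA : DifferentiableAt ℝ (fderiv ℝ u2) (ζ.re, ζ.im) := hfd.differentiableAt one_ne_zero
  set A := fderiv ℝ (fderiv ℝ u2) (ζ.re, ζ.im) with hAdef
  have hAf : HasFDerivAt (fderiv ℝ u2) A (ζ.re, ζ.im) := hA.hasFDerivAt
  have hsymm : A (0,1) (1,0) = A (1,0) (0,1) := (hcd.isSymmSndFDerivAt (by simp)).eq _ _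
  have hd2 : ∀ v : ℝ × ℝ, HasFDerivAt (fun q => fderiv ℝ u2 q v)
      ((ContinuousLinearMap.apply ℝ ℝ v).comp A) (ζ.re, ζ.im) :=
    fun v => (ContinuousLinearMap.apply ℝ ℝ v).hasFDerivAt.comp _ hAf
  have hlap' : A (1,0) (1,0) + A (0,1) (0,1) = 0 := by
    have h1 := (hd2 (1,0)).fderiv
    have h2 := (hd2 (0,1)).fderiv
    simp only [d2] at hlap
    rw [h1, h2] at hlap
    simpa using hlap
  set E : ℂ →L[ℝ] ℝ × ℝ := Complex.reCLM.prod Complex.imCLM with hE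
  set L1 : ℂ →L[ℝ] ℝ := ((ContinuousLinearMap.apply ℝ ℝ ((1:ℝ),(0:ℝ))).comp A).comp E with hL1
  set L2 : ℂ →L[ℝ] ℝ := ((ContinuousLinearMap.apply ℝ ℝ ((0:ℝ),(1:ℝ))).comp A).comp E with hL2
  have hux : HasFDerivAt (fun z : ℂ => fderiv ℝ u2 (z.re, z.im) ((1:ℝ),(0:ℝ))) L1 ζ :=
    (hd2 (1,0)).comp (f := E) ζ E.hasFDerivAt
  have huy : HasFDerivAt (fun z : ℂ => fderiv ℝ u2 (z.re, z.im) ((0:ℝ),(1:ℝ))) L2 ζ :=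
    (hd2 (0,1)).comp (f := E) ζ E.hasFDerivAt
  have hgR : HasFDerivAt (fun z : ℂ => ((fderiv ℝ u2 (z.re, z.im) (1,0) : ℝ) : ℂ)
      - (fderiv ℝ u2 (z.re, z.im) (0,1) : ℂ) * I)
      (L1.smulRight (1:ℂ) - L2.smulRight I) ζ := by
    have h1 := hux.smul_const (1:ℂ)
    have h2 := huy.smul_const I
    have := h1.sub h2
    apply this.congr_of_eventuallyEq
    filter_upwards with z
    simp [Complex.real_smul]
  set α := A (1,0) (1,0) with hα
  set β := A (1,0) (0,1) with hβ
  set D : ℂ →L[ℂ] ℂ := ContinuousLinearMap.smulRight (1 : ℂ →L[ℂ] ℂ) ((α : ℂ) - (β : ℂ) * I)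
    with hD
  have hDres : D.restrictScalars ℝ = L1.smulRight (1:ℂ) - L2.smulRight I := by
    ext z
    have hsplit : ((z.re, z.im) : ℝ × ℝ) = z.re • ((1:ℝ),(0:ℝ)) + z.im • ((0:ℝ),(1:ℝ)) := by
      ext <;> simp
    have hA2 : ∀ v : ℝ × ℝ, A (z.re, z.im) v = z.re * A (1,0) v + z.im * A (0,1) v := by
      intro v
      rw [hsplit, map_add, _root_.map_smul, _root_.map_smul]
      simp
    simp only [ContinuousLinearMap.coe_restrictScalars', hD,
      ContinuousLinearMap.smulRight_apply, ContinuousLinearMap.sub_apply,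
      ContinuousLinearMap.one_apply, hL1, hL2, ContinuousLinearMap.comp_apply,
      ContinuousLinearMap.apply_apply, hE, ContinuousLinearMap.prod_apply,
      Complex.reCLM_apply, Complex.imCLM_apply]
    rw [hA2, hA2]
    rw [← hα, ← hβ, hsymm]
    have hββ : A (0,1) (0,1) = -α := by rw [hα]; linarith
    rw [hββ]
    simp [Complex.ext_iff, Complex.real_smul, smul_eq_mul]
    ring
  have hgres : HasFDerivAt (fun z : ℂ => ((fderiv ℝ u2 (z.re, z.im) (1,0) : ℝ) : ℂ)
      - (fderiv ℝ u2 (z.re, z.im) (0,1) : ℂ) * I) (D.restrictScalars ℝ) ζ := by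
    rw [hDres]; exact hgR
  have hgC : HasFDerivAt (fun z : ℂ => ((fderiv ℝ u2 (z.re, z.im) (1,0) : ℝ) : ℂ)
      - (fderiv ℝ u2 (z.re, z.im) (0,1) : ℂ) * I) D ζ := by
    rw [hasFDerivAt_iff_isLittleO_nhds_zero] at hgres ⊢
    simpa only [ContinuousLinearMap.coe_restrictScalars'] using hgres
  exact hgC.differentiableAt


set_option maxHeartbeats 2000000 in
/-- A harmonic function on the rectangle `(0,l) × (-h,h)`, smooth up to the boundary,
vanishing together with its normal derivative on the two horizontal boundary segments,
is identically zero in the rectangle. -/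
theorem stmt_3 (l h : ℝ) (hl : 0 < l) (hh : 0 < h)
    (u2 : ℝ × ℝ → ℝ) (U : Set (ℝ × ℝ)) (hU : IsOpen U)
    (hcl : closure (Ioo 0 l ×ˢ Ioo (-h) h) ⊆ U)
    (hsm : ContDiffOn ℝ 2 u2 U)
    (hharm : ∀ p ∈ Ioo 0 l ×ˢ Ioo (-h) h, d2 u2 (1, 0) p + d2 u2 (0, 1) p = 0)
    (hb : ∀ x ∈ Ioo 0 l,
      u2 (x, h) = 0 ∧ u2 (x, -h) = 0 ∧
      fderiv ℝ u2 (x, h) (0, 1) = 0 ∧ fderiv ℝ u2 (x, -h) (0, 1) = 0) :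
    ∀ p ∈ Ioo 0 l ×ˢ Ioo (-h) h, u2 p = 0 := by
  intro p hp
  set g : ℂ → ℂ := fun z => ((fderiv ℝ u2 (z.re, z.im) ((1:ℝ),(0:ℝ)) : ℝ) : ℂ)
      - (fderiv ℝ u2 (z.re, z.im) ((0:ℝ),(1:ℝ)) : ℂ) * I with hg
  have hRU : (Ioo 0 l ×ˢ Ioo (-h) h : Set (ℝ × ℝ)) ⊆ U := subset_closure.trans hcl
  have hclR : closure (Ioo 0 l ×ˢ Ioo (-h) h : Set (ℝ × ℝ)) = Icc 0 l ×ˢ Icc (-h) h := by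
    rw [closure_prod_eq, closure_Ioo hl.ne, closure_Ioo (by linarith : -h ≠ h)]
  have hmemU : ∀ q : ℝ × ℝ, q.1 ∈ Icc 0 l → q.2 ∈ Icc (-h) h → q ∈ U := by
    intro q h1 h2
    exact hcl (by rw [hclR]; exact ⟨h1, h2⟩)
  have hfc : ContinuousOn (fderiv ℝ u2) U :=
    hsm.continuousOn_fderiv_of_isOpen hU (by norm_num)
  have hE : Continuous fun z : ℂ => ((z.re, z.im) : ℝ × ℝ) := by continuity
  have hgcont : ∀ z : ℂ, ((z.re, z.im) : ℝ × ℝ) ∈ U → ContinuousAt g z := by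
    intro z hz
    have h1 : ContinuousAt (fderiv ℝ u2) (z.re, z.im) := hfc.continuousAt (hU.mem_nhds hz)
    have h2 : ContinuousAt (fun w : ℂ => fderiv ℝ u2 (w.re, w.im)) z := ContinuousAt.comp (x := z) h1 hE.continuousAt
    have h3 : ContinuousAt (fun w : ℂ => fderiv ℝ u2 (w.re, w.im) ((1:ℝ),(0:ℝ))) z :=
      ((ContinuousLinearMap.apply ℝ ℝ ((1:ℝ),(0:ℝ))).continuous.continuousAt).comp h2
    have h4 : ContinuousAt (fun w : ℂ => fderiv ℝ u2 (w.re, w.im) ((0:ℝ),(1:ℝ))) z :=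
      ((ContinuousLinearMap.apply ℝ ℝ ((0:ℝ),(1:ℝ))).continuous.continuousAt).comp h2
    rw [hg]
    exact ((Complex.continuous_ofReal.continuousAt.comp h3).sub
      ((Complex.continuous_ofReal.continuousAt.comp h4).mul continuousAt_const))
  have hgdiffR : ∀ z : ℂ, z.re ∈ Ioo 0 l → z.im ∈ Ioo (-h) h → DifferentiableAt ℂ g z := by
    intro z h1 h2
    have hzR : ((z.re, z.im) : ℝ × ℝ) ∈ Ioo 0 l ×ˢ Ioo (-h) h := ⟨h1, h2⟩
    exact g_diffAt (hsm.contDiffAt (hU.mem_nhds (hRU hzR))) (hharm _ hzR)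
  have hgtop : ∀ z : ℂ, z.re ∈ Ioo 0 l → z.im = h → g z = 0 := by
    intro z hx hzim
    have hxU : ((z.re, h) : ℝ × ℝ) ∈ U := hmemU _ ⟨hx.1.le, hx.2.le⟩ ⟨by linarith, le_rfl⟩
    have hdiff : DifferentiableAt ℝ u2 (z.re, h) :=
      (hsm.contDiffAt (hU.mem_nhds hxU)).differentiableAt two_ne_zero
    have hφ : HasDerivAt (fun t : ℝ => u2 (t, h)) (fderiv ℝ u2 (z.re, h) ((1:ℝ),(0:ℝ))) z.re := by
      have h1 : HasDerivAt (fun t : ℝ => ((t, h) : ℝ × ℝ)) ((1:ℝ),(0:ℝ)) z.re :=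
        (hasDerivAt_id z.re).prodMk (hasDerivAt_const z.re h)
      exact hdiff.hasFDerivAt.comp_hasDerivAt z.re h1
    have hzero : (fun t : ℝ => u2 (t, h)) =ᶠ[nhds z.re] fun _ => (0:ℝ) := by
      filter_upwards [isOpen_Ioo.mem_nhds hx] with t ht
      exact (hb t ht).1
    have h0 : HasDerivAt (fun t : ℝ => u2 (t, h)) 0 z.re :=
      (hasDerivAt_const z.re (0:ℝ)).congr_of_eventuallyEq hzero
    have hux0 : fderiv ℝ u2 (z.re, h) ((1:ℝ),(0:ℝ)) = 0 := hφ.unique h0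
    have huy0 : fderiv ℝ u2 (z.re, h) ((0:ℝ),(1:ℝ)) = 0 := (hb z.re hx).2.2.1
    rw [hg]
    simp only [hzim, hux0, huy0]
    simp
  -- the zero extension across the top edge
  set G : ℂ → ℂ := fun z => if z.im ≤ h then g z else 0 with hGdef
  set Dset : Set ℂ := Ioo (l/4) (3*l/4) ×ℂ Ioo 0 (2*h) with hDset
  have hDopen : IsOpen Dset := isOpen_Ioo.reProdIm isOpen_Ioo
  have hUofD : ∀ z : ℂ, z.re ∈ Ioo (l/4) (3*l/4) → z.im ∈ Icc 0 h →
      ((z.re, z.im) : ℝ × ℝ) ∈ U := by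
    intro z h1 h2
    exact hmemU _ ⟨by linarith [h1.1], by linarith [h1.2]⟩ ⟨by linarith [h2.1], h2.2⟩
  have hGat : ∀ z ∈ Dset, ContinuousAt G z := by
    intro z hz
    obtain ⟨h1, h2⟩ := (Complex.mem_reProdIm).1 hz
    rcases lt_trichotomy z.im h with hlt | heq | hgt
    · have hev : g =ᶠ[nhds z] G := by
        filter_upwards [(isOpen_lt Complex.continuous_im continuous_const).mem_nhds
          (show z.im < h from hlt)] with w hw
        simp [hGdef, le_of_lt hw]
      exact (hgcont z (hUofD z h1 ⟨h2.1.le, hlt.le⟩)).congr hev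
    · have hgz0 : g z = 0 := hgtop z ⟨by linarith [h1.1], by linarith [h1.2]⟩ heq
      have hgc : ContinuousAt g z := hgcont z (hUofD z h1 ⟨h2.1.le, heq.le⟩)
      have hnorm : Filter.Tendsto (fun w => ‖g w‖) (nhds z) (nhds 0) := by
        have := hgc.tendsto.norm
        rwa [hgz0, norm_zero] at this
      have hGb : ∀ w : ℂ, ‖G w‖ ≤ ‖g w‖ := by
        intro w
        by_cases hw : w.im ≤ h <;> simp [hGdef, hw]
      have htend : Filter.Tendsto G (nhds z) (nhds 0) := squeeze_zero_norm hGb hnorm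
      have hGz : G z = 0 := by simp [hGdef, heq.le, hgz0]
      rw [ContinuousAt, hGz]
      exact htend
    · have hev : (fun _ : ℂ => (0:ℂ)) =ᶠ[nhds z] G := by
        filter_upwards [(isOpen_lt continuous_const Complex.continuous_im).mem_nhds
          (show h < z.im from hgt)] with w hw
        simp [hGdef, not_le.2 hw]
      exact continuousAt_const.congr hev
  have hGcontD : ContinuousOn G Dset := fun z hz => (hGat z hz).continuousWithinAt
  have hGzero_upper : ∀ z : ℂ, z.re ∈ Ioo (l/4) (3*l/4) → h ≤ z.im → G z = 0 := by
    intro z h1 h2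
    rcases eq_or_lt_of_le h2 with he | hlt
    · have hgz0 : g z = 0 := hgtop z ⟨by linarith [h1.1], by linarith [h1.2]⟩ he.symm
      simp [hGdef, he.symm.le, hgz0]
    · simp [hGdef, not_le.2 hlt]
  have hlower : ∀ p q : ℂ, p ∈ Dset → q ∈ Dset → p.im ≤ h → q.im ≤ h → rectInt G p q = 0 := by
    intro p q hpD hqD hpim hqim
    obtain ⟨hpre, hpim'⟩ := (Complex.mem_reProdIm).1 hpD
    obtain ⟨hqre, hqim'⟩ := (Complex.mem_reProdIm).1 hqD
    apply rectInt_eq_zero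
    · apply hGcontD.mono
      intro z hz
      obtain ⟨h1, h2⟩ := (Complex.mem_reProdIm).1 hz
      exact (Complex.mem_reProdIm).2 ⟨Set.ordConnected_Ioo.uIcc_subset hpre hqre h1,
        Set.ordConnected_Ioo.uIcc_subset hpim' hqim' h2⟩
    · intro z hz
      obtain ⟨h1, h2⟩ := (Complex.mem_reProdIm).1 hz
      have hzre : z.re ∈ Ioo (l/4) (3*l/4) :=
        ⟨(lt_min hpre.1 hqre.1).trans h1.1, h1.2.trans_le (max_lt hpre.2 hqre.2).le⟩
      have hzim_pos : 0 < z.im := (lt_min hpim'.1 hqim'.1).trans h2.1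
      have hzim_lt : z.im < h := h2.2.trans_le (max_le hpim hqim)
      have hdiff : DifferentiableAt ℂ g z :=
        hgdiffR z ⟨by linarith [hzre.1], by linarith [hzre.2]⟩ ⟨by linarith, hzim_lt⟩
      have hev : G =ᶠ[nhds z] g := by
        filter_upwards [(isOpen_lt Complex.continuous_im continuous_const).mem_nhds
          (show z.im < h from hzim_lt)] with w hw
        simp [hGdef, le_of_lt hw]
      exact (hev.differentiableAt_iff.2 hdiff).differentiableWithinAt
  have hupper : ∀ p q : ℂ, p.re ∈ Ioo (l/4) (3*l/4) → q.re ∈ Ioo (l/4) (3*l/4) →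
      h ≤ p.im → h ≤ q.im → rectInt G p q = 0 := by
    intro p q hpre hqre hpim hqim
    have him_le : ∀ y : ℝ, y ∈ uIcc p.im q.im → h ≤ y := by
      intro y hy
      rw [Set.mem_uIcc] at hy
      rcases hy with ⟨hy1, _⟩ | ⟨hy1, _⟩ <;> linarith
    have hre_mem : ∀ x : ℝ, x ∈ uIcc p.re q.re → x ∈ Ioo (l/4) (3*l/4) :=
      fun x hx => Set.ordConnected_Ioo.uIcc_subset hpre hqre hx
    have hz1 : EqOn (fun x : ℝ => G (x + p.im * I)) (fun _ => (0:ℂ)) (uIcc p.re q.re) := by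
      intro x hx
      exact hGzero_upper _ (by simpa using hre_mem x hx) (by simpa using hpim)
    have hz2 : EqOn (fun x : ℝ => G (x + q.im * I)) (fun _ => (0:ℂ)) (uIcc p.re q.re) := by
      intro x hx
      exact hGzero_upper _ (by simpa using hre_mem x hx) (by simpa using hqim)
    have hz3 : EqOn (fun y : ℝ => G (q.re + y * I)) (fun _ => (0:ℂ)) (uIcc p.im q.im) := by
      intro y hy
      exact hGzero_upper _ (by simpa using hqre) (by simpa using him_le y hy)
    have hz4 : EqOn (fun y : ℝ => G (p.re + y * I)) (fun _ => (0:ℂ)) (uIcc p.im q.im) := by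
      intro y hy
      exact hGzero_upper _ (by simpa using hpre) (by simpa using him_le y hy)
    simp only [rectInt]
    rw [intervalIntegral.integral_congr hz1, intervalIntegral.integral_congr hz2,
      intervalIntegral.integral_congr hz3, intervalIntegral.integral_congr hz4]
    simp
  have hhD : h ∈ Ioo (0:ℝ) (2*h) := ⟨hh, by linarith⟩
  have hrect : ∀ p q : ℂ, p ∈ Dset → q ∈ Dset → rectInt G p q = 0 := by
    intro p q hpD hqD
    obtain ⟨hpre, hpim'⟩ := (Complex.mem_reProdIm).1 hpD
    obtain ⟨hqre, hqim'⟩ := (Complex.mem_reProdIm).1 hqD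
    rcases le_total p.im h with hpim | hpim <;> rcases le_total q.im h with hqim | hqim
    · exact hlower p q hpD hqD hpim hqim
    · rw [rectInt_split G p q h (vert_integrable hGcontD hpre hpim' hhD)
        (vert_integrable hGcontD hpre hhD hqim') (vert_integrable hGcontD hqre hpim' hhD)
        (vert_integrable hGcontD hqre hhD hqim')]
      rw [hlower p ⟨q.re, h⟩ hpD ⟨hqre, hhD⟩ hpim le_rfl,
        hupper ⟨p.re, h⟩ q hpre hqre le_rfl hqim]
      simp
    · rw [rectInt_split G p q h (vert_integrable hGcontD hpre hpim' hhD)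
        (vert_integrable hGcontD hpre hhD hqim') (vert_integrable hGcontD hqre hpim' hhD)
        (vert_integrable hGcontD hqre hhD hqim')]
      rw [hupper p ⟨q.re, h⟩ hpre hqre hpim le_rfl,
        hlower ⟨p.re, h⟩ q ⟨hpre, hhD⟩ hqD le_rfl hqim]
      simp
    · exact hupper p q hpre hqre hpim hqim
  have hGdiffD : DifferentiableOn ℂ G Dset :=
    morera_rect (by linarith) (by linarith) hGcontD hrect
  have hGanD : AnalyticOnNhd ℂ G Dset := hGdiffD.analyticOnNhd hDopen
  -- G vanishes identically on Dset by the identity theorem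
  have hz₀mem : (⟨l/2, 3*h/2⟩ : ℂ) ∈ Dset :=
    (Complex.mem_reProdIm).2 ⟨⟨by linarith, by linarith⟩, ⟨by linarith, by linarith⟩⟩
  have hGev0 : G =ᶠ[nhds (⟨l/2, 3*h/2⟩ : ℂ)] 0 := by
    filter_upwards [(isOpen_lt continuous_const Complex.continuous_im).mem_nhds
      (show h < (⟨l/2, 3*h/2⟩ : ℂ).im from by simpa using by linarith)] with w hw
    simp [hGdef, not_le.2 hw]
  have hGzeroD : EqOn G 0 Dset :=
    hGanD.eqOn_zero_of_preconnected_of_eventuallyEq_zero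
      (reProdIm_preconnected _ _ _ _) hz₀mem hGev0
  -- hence g vanishes near a point of the open rectangle
  have hw₀mem : (⟨l/2, h/2⟩ : ℂ) ∈ Dset :=
    (Complex.mem_reProdIm).2 ⟨⟨by linarith, by linarith⟩, ⟨by linarith, by linarith⟩⟩
  have hgev0 : g =ᶠ[nhds (⟨l/2, h/2⟩ : ℂ)] 0 := by
    have hopen : IsOpen (Dset ∩ {w : ℂ | w.im < h}) :=
      hDopen.inter (isOpen_lt Complex.continuous_im continuous_const)
    filter_upwards [hopen.mem_nhds ⟨hw₀mem, by simpa using by linarith⟩] with w hw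
    have hGw : G w = 0 := hGzeroD hw.1
    simp only [hGdef] at hGw
    rw [if_pos (le_of_lt hw.2)] at hGw
    simpa using hGw
  -- identity theorem on the full rectangle
  have hganR : AnalyticOnNhd ℂ g (Ioo 0 l ×ℂ Ioo (-h) h) := by
    apply DifferentiableOn.analyticOnNhd _ (isOpen_Ioo.reProdIm isOpen_Ioo)
    intro z hz
    obtain ⟨h1, h2⟩ := (Complex.mem_reProdIm).1 hz
    exact (hgdiffR z h1 h2).differentiableWithinAt
  have hw₀R : (⟨l/2, h/2⟩ : ℂ) ∈ Ioo 0 l ×ℂ Ioo (-h) h :=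
    (Complex.mem_reProdIm).2 ⟨⟨by linarith, by linarith⟩, ⟨by linarith, by linarith⟩⟩
  have hgzeroR : EqOn g 0 (Ioo 0 l ×ℂ Ioo (-h) h) :=
    hganR.eqOn_zero_of_preconnected_of_eventuallyEq_zero
      (reProdIm_preconnected _ _ _ _) hw₀R hgev0
  -- hence the derivative of u2 vanishes on the rectangle
  have hfzero : ∀ q : ℝ × ℝ, q ∈ Ioo 0 l ×ˢ Ioo (-h) h → fderiv ℝ u2 q = 0 := by
    intro q hq
    have hzq : g ⟨q.1, q.2⟩ = 0 := hgzeroR ((Complex.mem_reProdIm).2 ⟨hq.1, hq.2⟩)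
    simp only [hg, Complex.ext_iff, Complex.sub_re, Complex.sub_im, Complex.ofReal_re,
      Complex.ofReal_im, Complex.mul_re, Complex.mul_im, Complex.I_re, Complex.I_im,
      Complex.zero_re, Complex.zero_im] at hzq
    have h1 : fderiv ℝ u2 q ((1:ℝ),(0:ℝ)) = 0 := by
      have := hzq.1
      simpa using this
    have h2 : fderiv ℝ u2 q ((0:ℝ),(1:ℝ)) = 0 := by
      have := hzq.2
      simpa using this
    apply ContinuousLinearMap.ext
    intro w
    have hw : w = w.1 • ((1:ℝ),(0:ℝ)) + w.2 • ((0:ℝ),(1:ℝ)) := by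
      ext <;> simp
    rw [hw, map_add, _root_.map_smul, _root_.map_smul, h1, h2]
    simp
  -- u2 is constant on the rectangle
  have hRopen : IsOpen (Ioo 0 l ×ˢ Ioo (-h) h : Set (ℝ × ℝ)) := isOpen_Ioo.prod isOpen_Ioo
  have hconv : Convex ℝ (Ioo 0 l ×ˢ Ioo (-h) h : Set (ℝ × ℝ)) :=
    (convex_Ioo _ _).prod (convex_Ioo _ _)
  have hdiffR : DifferentiableOn ℝ u2 (Ioo 0 l ×ˢ Ioo (-h) h) :=
    (hsm.mono hRU).differentiableOn two_ne_zero
  have hbound : ∀ x ∈ (Ioo 0 l ×ˢ Ioo (-h) h : Set (ℝ × ℝ)),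
      ‖fderivWithin ℝ u2 (Ioo 0 l ×ˢ Ioo (-h) h) x‖ ≤ 0 := by
    intro x hx
    rw [fderivWithin_of_isOpen hRopen hx, hfzero x hx]
    simp
  have hconst : ∀ q ∈ (Ioo 0 l ×ˢ Ioo (-h) h : Set (ℝ × ℝ)), u2 q = u2 p := by
    intro q hq
    have := hconv.norm_image_sub_le_of_norm_fderivWithin_le hdiffR hbound hp hq
    have h0 : ‖u2 q - u2 p‖ ≤ 0 := by simpa using this
    have := le_antisymm h0 (norm_nonneg _)
    rw [norm_eq_zero, sub_eq_zero] at this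
    exact this
  -- take the limit towards the top edge where u2 vanishes
  have hmidIoo : l/2 ∈ Ioo 0 l := ⟨by linarith, by linarith⟩
  have hmidU : ((l/2, h) : ℝ × ℝ) ∈ U := hmemU _ ⟨by linarith, by linarith⟩ ⟨by linarith, le_rfl⟩
  have hcont2 : ContinuousAt u2 (l/2, h) := (hsm.contDiffAt (hU.mem_nhds hmidU)).continuousAt
  have hcm : ContinuousAt (fun t : ℝ => u2 (l/2, t)) h := by
    apply hcont2.comp
    exact (continuous_const.prodMk continuous_id).continuousAt
  have hlim : Filter.Tendsto (fun t : ℝ => u2 (l/2, t)) (nhdsWithin h (Iio h))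
      (nhds (u2 (l/2, h))) := hcm.continuousWithinAt.tendsto
  have heqev : (fun t : ℝ => u2 (l/2, t)) =ᶠ[nhdsWithin h (Iio h)] fun _ => u2 p := by
    filter_upwards [Ioo_mem_nhdsLT hh] with t ht
    exact hconst (l/2, t) ⟨hmidIoo, ⟨by linarith [ht.1], ht.2⟩⟩
  have hlim2 : Filter.Tendsto (fun _ : ℝ => u2 p) (nhdsWithin h (Iio h))
      (nhds (u2 (l/2, h))) := hlim.congr' heqev
  have hfinal : u2 p = u2 (l/2, h) := tendsto_nhds_unique tendsto_const_nhds hlim2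
  rw [hfinal]
  exact (hb (l/2) hmidIoo).1
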